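/- Let X be a smooth projective surface, f : X → Y a contraction of a (-1)-curve C, and ω an ample divisor on Y. Suppose E is a coherent sheaf (perverse sheaf) with Chern character ch(E) = (r, β, n), and suppose there is an exact sequence 0 → T → E → F → 0 where ch(T) = (0, aC, ch₂(T)) with a ≥ 0, ch₂(T) ≤ -a/2, F satisfies ch₁(F)² - 2·ch₀(F)·ch₂(F) ≥ 0, ch₀(F) ≥ 0, and C·ch₁(E) = C·ch₁(F) - a ≥ 0 (where C² = -1). Then ch₁(E)² - 2·ch₀(E)·ch₂(E) ≥ 0. -/
import Mathlib


/-!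
STATEMENT 0 (Proposition 3.7 of the paper, key computation).
Algebraic abstraction: `r, n` are `ch₀(E), ch₂(E)`; `rF, nF` those of the
torsion-free quotient `F`; `T` has `ch(T) = (0, a·C, t)` with `C² = -1`;
`cβF = C·ch₁(F)`; `βF2 = ch₁(F)²`.  From `ch(E) = ch(T) + ch(F)` one has
`ch₁(E)² = βF2 + 2·a·cβF - a²`.  Conclusion: `ch₁(E)² - 2·ch₀(E)·ch₂(E) ≥ 0`.
-/
theorem stmt_0 (r n rF nF a t cβF βF2 β2 : ℝ)
    (ha : 0 ≤ a)
    (hr : r = rF)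
    (hn : n = nF + t)
    (ht : t ≤ -a / 2)
    (hC : cβF - a ≥ 0)
    (hF : βF2 - 2 * rF * nF ≥ 0)
    (hrF : rF ≥ 0)
    (hβ : β2 = βF2 + 2 * a * cβF - a ^ 2) :
    β2 - 2 * r * n ≥ 0 := by
  subst hr hn hβ; nlinarith [mul_nonneg ha (show (0:ℝ) ≤ cβF - a by linarith), mul_nonneg hrF (show (0:ℝ) ≤ -a/2 - t by linarith), mul_nonneg hrF ha, sq_nonneg a]
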